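/- Every n-uniform hypergraph with maximum neighborhood size at most 2^(n-3)/n has a proper halving 2-coloring, i.e., a proper 2-coloring in which the numbers of vertices of the two colors differ by at most 1. -/

import Mathlib

open Finset


lemma cylinder_count (m : ℕ) (C : Finset (Fin m)) (g : Fin m → Bool) :
    (Finset.univ.filter (fun b : Fin m → Bool => ∀ i ∈ C, b i = g i)).card
      = 2 ^ (m - C.card) := by
  classical
  induction C using Finset.induction with
  | empty => simp [Fintype.card_fun]
  | @insert j C hj ih =>
    have hcardle : (insert j C).card ≤ m := by
      simpa using Finset.card_le_univ (insert j C)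
    have hins : Finset.univ.filter (fun b : Fin m → Bool => ∀ i ∈ insert j C, b i = g i)
        = (Finset.univ.filter (fun b : Fin m → Bool => ∀ i ∈ C, b i = g i)).filter (fun b => b j = g j) := by
      ext b
      simp only [Finset.mem_filter, Finset.mem_univ, true_and, Finset.forall_mem_insert]
      tauto
    have hbij : ((Finset.univ.filter (fun b : Fin m → Bool => ∀ i ∈ C, b i = g i)).filter (fun b => b j = g j)).card
        = ((Finset.univ.filter (fun b : Fin m → Bool => ∀ i ∈ C, b i = g i)).filter (fun b => ¬ b j = g j)).card := by
      refine Finset.card_bij' (fun b _ => Function.update b j (!(b j)))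
        (fun b _ => Function.update b j (!(b j))) ?_ ?_ ?_ ?_
      · intro b hb
        simp only [Finset.mem_filter] at hb ⊢
        refine ⟨⟨Finset.mem_univ _, fun i hi => ?_⟩, ?_⟩
        · rw [Function.update_of_ne (by rintro rfl; exact hj hi)]
          exact hb.1.2 i hi
        · simp only [Function.update_self, hb.2]
          cases hg : g j <;> simp
      · intro b hb
        simp only [Finset.mem_filter] at hb ⊢
        refine ⟨⟨Finset.mem_univ _, fun i hi => ?_⟩, ?_⟩
        · rw [Function.update_of_ne (by rintro rfl; exact hj hi)]
          exact hb.1.2 i hi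
        · simp only [Function.update_self]
          cases hg : g j <;> cases hbj : b j <;> simp_all
      · intro b hb
        funext i
        by_cases hij : i = j
        · subst hij; simp
        · simp [Function.update_of_ne hij]
      · intro b hb
        funext i
        by_cases hij : i = j
        · subst hij; simp
        · simp [Function.update_of_ne hij]
    have hsplit : ((Finset.univ.filter (fun b : Fin m → Bool => ∀ i ∈ C, b i = g i)).filter (fun b => b j = g j)).card
        + ((Finset.univ.filter (fun b : Fin m → Bool => ∀ i ∈ C, b i = g i)).filter (fun b => ¬ b j = g j)).card = (Finset.univ.filter (fun b : Fin m → Bool => ∀ i ∈ C, b i = g i)).card :=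
      Finset.card_filter_add_card_filter_not _
    rw [hins]
    have h2 : 2 * ((Finset.univ.filter (fun b : Fin m → Bool => ∀ i ∈ C, b i = g i)).filter (fun b => b j = g j)).card = (Finset.univ.filter (fun b : Fin m → Bool => ∀ i ∈ C, b i = g i)).card := by
      rw [two_mul]; nth_rewrite 2 [hbij]; exact hsplit
    have hc : (insert j C).card = C.card + 1 := Finset.card_insert_of_notMem hj
    have hm : m - C.card = (m - (insert j C).card) + 1 := by clear * - hc hcardle; omega
    rw [ih, hm, pow_succ] at h2
    linarith

lemma indep_count (m : ℕ) (C : Finset (Fin m)) (A B : Finset (Fin m → Bool))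
    (hA : ∀ b b' : Fin m → Bool, (∀ i ∈ C, b i = b' i) → (b ∈ A ↔ b' ∈ A))
    (hB : ∀ b b' : Fin m → Bool, (∀ i ∉ C, b i = b' i) → (b ∈ B ↔ b' ∈ B)) :
    (A ∩ B).card * 2 ^ m = A.card * B.card := by
  classical
  have key : ((A ∩ B) ×ˢ (Finset.univ : Finset (Fin m → Bool))).card = (A ×ˢ B).card := by
    refine Finset.card_bij' (fun p _ => ((fun i => if i ∈ C then p.1 i else p.2 i),
                                        (fun i => if i ∈ C then p.2 i else p.1 i)))
      (fun p _ => ((fun i => if i ∈ C then p.1 i else p.2 i),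
                   (fun i => if i ∈ C then p.2 i else p.1 i))) ?_ ?_ ?_ ?_
    · intro p hp
      simp only [Finset.mem_product] at hp ⊢
      obtain ⟨h1, h2⟩ := hp
      rw [Finset.mem_inter] at h1
      constructor
      · exact (hA p.1 _ (fun i hi => by simp [hi])).mp h1.1
      · exact (hB p.1 _ (fun i hi => by simp [hi])).mp h1.2
    · intro p hp
      simp only [Finset.mem_product] at hp ⊢
      obtain ⟨h1, h2⟩ := hp
      refine ⟨Finset.mem_inter.mpr ⟨?_, ?_⟩, Finset.mem_univ _⟩
      · exact (hA p.1 _ (fun i hi => by simp [hi])).mp h1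
      · exact (hB p.2 _ (fun i hi => by simp [hi])).mp h2
    · intro p hp
      obtain ⟨p1, p2⟩ := p
      simp only [Prod.mk.injEq]
      constructor <;> · funext i; by_cases hi : i ∈ C <;> simp [hi]
    · intro p hp
      obtain ⟨p1, p2⟩ := p
      simp only [Prod.mk.injEq]
      constructor <;> · funext i; by_cases hi : i ∈ C <;> simp [hi]
  rw [Finset.card_product, Finset.card_product, Finset.card_univ, Fintype.card_fun,
    Fintype.card_bool, Fintype.card_fin] at key
  exact key

theorem lll_count {m : ℕ} {ι : Type} [DecidableEq ι] (J : Finset ι)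
    (A : ι → Finset (Fin m → Bool)) (C : ι → Finset (Fin m))
    (hdet : ∀ j ∈ J, ∀ b b' : Fin m → Bool, (∀ i ∈ C j, b i = b' i) → (b ∈ A j ↔ b' ∈ A j))
    (x : ℝ) (hx0 : 0 ≤ x) (hx1 : x < 1) (d : ℕ)
    (hp : ∀ j ∈ J, ((A j).card : ℝ) ≤ x * (1 - x) ^ d * 2 ^ m)
    (hd : ∀ j ∈ J, (J.filter (fun f => f ≠ j ∧ (C f ∩ C j).Nonempty)).card ≤ d) :
    ∃ b : Fin m → Bool, ∀ j ∈ J, b ∉ A j := by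
  classical
  have hx1' : (0:ℝ) < 1 - x := by linarith
  -- W S = number of assignments avoiding all events in S
  let W : Finset ι → ℕ := fun S => (Finset.univ.filter
      (fun b : Fin m → Bool => ∀ j ∈ S, b ∉ A j)).card
  have hWempty : W ∅ = 2 ^ m := by
    simp only [W, Finset.notMem_empty, false_implies, implies_true, Finset.filter_true]
    simp [Fintype.card_fun]
  -- main claim
  have key : ∀ N : ℕ, ∀ S ⊆ J, S.card ≤ N → ∀ j ∈ J, j ∉ S →
      (1 - x) * (W S : ℝ) ≤ (W (insert j S) : ℝ) := by
    intro N
    induction N using Nat.strong_induction_on with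
    | _ N IH =>
    intro S hSJ hcard j hjJ hjS
    set S₁ := S.filter (fun f => (C f ∩ C j).Nonempty) with hS₁
    set S₂ := S \ S₁ with hS₂
    have hS₁S : S₁ ⊆ S := Finset.filter_subset _ _
    have hS₂S : S₂ ⊆ S := Finset.sdiff_subset
    have hS1d : S₁.card ≤ d := by
      refine le_trans (Finset.card_le_card ?_) (hd j hjJ)
      intro f hf
      rw [Finset.mem_filter] at hf ⊢
      exact ⟨hSJ hf.1, fun h => hjS (h ▸ hf.1), hf.2⟩
    -- the set of good assignments for S
    set G := Finset.univ.filter (fun b : Fin m → Bool => ∀ f ∈ S, b ∉ A f) with hG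
    set G₂ := Finset.univ.filter (fun b : Fin m → Bool => ∀ f ∈ S₂, b ∉ A f) with hG₂
    have hWS2 : G₂.card = W S₂ := rfl
    have hGsplit : (G.filter (fun b => b ∈ A j)).card + W (insert j S) = W S := by
      have h1 : Finset.univ.filter (fun b : Fin m → Bool => ∀ f ∈ insert j S, b ∉ A f)
          = G.filter (fun b => b ∉ A j) := by
        ext b
        simp only [Finset.mem_filter, Finset.mem_univ, true_and, Finset.forall_mem_insert, hG]
        tauto
      show _ + (Finset.univ.filter (fun b : Fin m → Bool => ∀ f ∈ insert j S, b ∉ A f)).card = _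
      rw [h1]
      exact Finset.card_filter_add_card_filter_not _
    -- B ≤ |A j ∩ G₂|
    have hBsub : G.filter (fun b => b ∈ A j) ⊆ A j ∩ G₂ := by
      intro b hb
      simp only [Finset.mem_filter, hG, Finset.mem_univ, true_and] at hb
      rw [Finset.mem_inter]
      exact ⟨hb.2, by
        simp only [hG₂, Finset.mem_filter, Finset.mem_univ, true_and]
        exact fun f hf => hb.1 f (hS₂S hf)⟩
    -- independence
    have hindep : ((A j ∩ G₂).card : ℝ) * 2 ^ m = ((A j).card : ℝ) * (G₂.card : ℝ) := by
      have := indep_count m (C j) (A j) G₂ (hdet j hjJ) ?_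
      · exact_mod_cast congrArg (Nat.cast : ℕ → ℝ) this
      · intro b b' hbb'
        simp only [hG₂, Finset.mem_filter, Finset.mem_univ, true_and]
        constructor <;> intro h f hf
        · have hfS : f ∈ S := hS₂S hf
          have hfJ : f ∈ J := hSJ hfS
          have hCf : ∀ i ∈ C f, b i = b' i := by
            intro i hi
            refine hbb' i (fun hij => ?_)
            have : f ∈ S₁ := by
              rw [hS₁, Finset.mem_filter]
              exact ⟨hfS, ⟨i, Finset.mem_inter.mpr ⟨hi, hij⟩⟩⟩
            rw [hS₂, Finset.mem_sdiff] at hf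
            exact hf.2 this
          exact fun hb' => (h f hf) ((hdet f hfJ b b' hCf).mpr hb')
        · have hfS : f ∈ S := hS₂S hf
          have hfJ : f ∈ J := hSJ hfS
          have hCf : ∀ i ∈ C f, b i = b' i := by
            intro i hi
            refine hbb' i (fun hij => ?_)
            have : f ∈ S₁ := by
              rw [hS₁, Finset.mem_filter]
              exact ⟨hfS, ⟨i, Finset.mem_inter.mpr ⟨hi, hij⟩⟩⟩
            rw [hS₂, Finset.mem_sdiff] at hf
            exact hf.2 this
          exact fun hb => (h f hf) ((hdet f hfJ b b' hCf).mp hb)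
    -- chain
    have chain : ∀ U ⊆ S₁, ((1-x) ^ U.card) * (W S₂ : ℝ) ≤ (W (S₂ ∪ U) : ℝ) := by
      intro U
      induction U using Finset.induction with
      | empty => intro _; simp
      | @insert f U hfU ihU =>
        intro hsub
        have hfS₁ : f ∈ S₁ := hsub (Finset.mem_insert_self f U)
        have hUS₁ : U ⊆ S₁ := fun u hu => hsub (Finset.mem_insert_of_mem hu)
        have hfS : f ∈ S := hS₁S hfS₁
        have hfS₂ : f ∉ S₂ := by
          rw [hS₂, Finset.mem_sdiff]; tauto
        have hsubS : S₂ ∪ U ⊆ S := Finset.union_subset hS₂S (hUS₁.trans hS₁S)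
        have hfnotin : f ∉ S₂ ∪ U := by
          rw [Finset.mem_union]; tauto
        have hcard' : (S₂ ∪ U).card < N := by
          have h1 : S₂ ∪ U ⊆ S.erase f := by
            intro u hu
            rw [Finset.mem_erase]
            exact ⟨fun h => hfnotin (h ▸ hu), hsubS hu⟩
          have h2 := Finset.card_le_card h1
          have h3 : (S.erase f).card = S.card - 1 := Finset.card_erase_of_mem hfS
          have h4 : 1 ≤ S.card := Finset.card_pos.mpr ⟨f, hfS⟩
          omega
        have hIH := IH _ hcard' (S₂ ∪ U) (hsubS.trans hSJ) le_rfl f (hSJ hfS) hfnotin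
        have heq : S₂ ∪ insert f U = insert f (S₂ ∪ U) := Finset.union_insert f S₂ U
        rw [heq, Finset.card_insert_of_notMem hfU, pow_succ]
        calc (1-x) ^ U.card * (1-x) * (W S₂ : ℝ)
            = (1-x) * ((1-x) ^ U.card * (W S₂ : ℝ)) := by ring
          _ ≤ (1-x) * (W (S₂ ∪ U) : ℝ) := by
              apply mul_le_mul_of_nonneg_left (ihU hUS₁) (le_of_lt hx1')
          _ ≤ (W (insert f (S₂ ∪ U)) : ℝ) := hIH
    -- put it together
    have hSunion : S₂ ∪ S₁ = S := Finset.sdiff_union_of_subset hS₁S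
    have hchainS : ((1-x) ^ S₁.card) * (W S₂ : ℝ) ≤ (W S : ℝ) := by
      have := chain S₁ le_rfl
      rwa [hSunion] at this
    have hBle : ((G.filter (fun b => b ∈ A j)).card : ℝ) ≤ x * (W S : ℝ) := by
      have h1 : ((G.filter (fun b => b ∈ A j)).card : ℝ) ≤ ((A j ∩ G₂).card : ℝ) := by
        exact_mod_cast Finset.card_le_card hBsub
      have h2m : (0:ℝ) < 2 ^ m := by positivity
      have h2 : ((A j ∩ G₂).card : ℝ) ≤ x * (1-x)^d * (W S₂ : ℝ) := by
        rw [← hWS2]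
        have := hindep
        nlinarith [hp j hjJ, (Nat.cast_nonneg (G₂.card) : (0:ℝ) ≤ (G₂.card:ℝ)), this]
      have h3 : x * (1-x)^d * (W S₂ : ℝ) ≤ x * ((1-x) ^ S₁.card * (W S₂ : ℝ)) := by
        have hpow : (1-x)^d ≤ (1-x) ^ S₁.card :=
          pow_le_pow_of_le_one (le_of_lt hx1') (by linarith) hS1d
        have := mul_le_mul_of_nonneg_right hpow (Nat.cast_nonneg (W S₂) : (0:ℝ) ≤ W S₂)
        nlinarith
      have h4 : x * ((1-x) ^ S₁.card * (W S₂ : ℝ)) ≤ x * (W S : ℝ) :=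
        mul_le_mul_of_nonneg_left hchainS hx0
      linarith
    have : (W (insert j S) : ℝ) = (W S : ℝ) - ((G.filter (fun b => b ∈ A j)).card : ℝ) := by
      rw [← hGsplit]; push_cast; ring
    rw [this]
    nlinarith [(Nat.cast_nonneg (W S) : (0:ℝ) ≤ (W S:ℝ))]
  -- conclude
  have hfinal : ∀ S ⊆ J, ((1-x) ^ S.card) * (2:ℝ) ^ m ≤ (W S : ℝ) := by
    intro S
    induction S using Finset.induction with
    | empty => intro _; rw [hWempty]; simp
    | @insert j S hjS ihS =>
      intro hsub
      have hjJ : j ∈ J := hsub (Finset.mem_insert_self j S)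
      have hSJ : S ⊆ J := fun u hu => hsub (Finset.mem_insert_of_mem hu)
      have h1 := key S.card S hSJ le_rfl j hjJ hjS
      rw [Finset.card_insert_of_notMem hjS, pow_succ]
      calc (1-x) ^ S.card * (1-x) * (2:ℝ)^m = (1-x) * ((1-x)^S.card * 2^m) := by ring
        _ ≤ (1-x) * (W S : ℝ) := mul_le_mul_of_nonneg_left (ihS hSJ) (le_of_lt hx1')
        _ ≤ (W (insert j S) : ℝ) := h1
  have hpos : (0:ℝ) < (W J : ℝ) := by
    refine lt_of_lt_of_le ?_ (hfinal J le_rfl)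
    positivity
  have hWpos : 0 < W J := by exact_mod_cast hpos
  obtain ⟨b, hb⟩ := Finset.card_pos.mp hWpos
  simp only [Finset.mem_filter, W] at hb
  exact ⟨b, hb.2⟩


lemma greedy_pairs {V : Type} [DecidableEq V] (n D : ℕ) (hD : 2*D + 2 ≤ n) :
    ∀ (E' : Finset (Finset V)),
    (∀ e ∈ E', n ≤ e.card) →
    (∀ e ∈ E', (E'.filter fun f => f ≠ e ∧ (e ∩ f).Nonempty).card ≤ D) →
    ∃ mf : Finset V → Finset V, (∀ e ∈ E', mf e ⊆ e ∧ (mf e).card = 2) ∧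
      (∀ e ∈ E', ∀ f ∈ E', mf e = mf f ∨ Disjoint (mf e) (mf f)) := by
  intro E'
  induction E' using Finset.induction with
  | empty => exact fun _ _ => ⟨fun _ => ∅, by simp, by simp⟩
  | @insert e E₀ he ih =>
    intro hunif hnb
    obtain ⟨mf, hmf1, hmf2⟩ := ih
      (fun f hf => hunif f (Finset.mem_insert_of_mem hf))
      (fun f hf => by
        refine le_trans (Finset.card_le_card ?_) (hnb f (Finset.mem_insert_of_mem hf))
        exact Finset.filter_subset_filter _ (Finset.subset_insert _ _))
    -- blocked vertices of e
    set X := E₀.biUnion mf with hX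
    have hblock : (e ∩ X).card ≤ 2 * D := by
      have hsub : e ∩ X ⊆ (E₀.filter (fun f => (mf f ∩ e).Nonempty)).biUnion mf := by
        intro v hv
        rw [Finset.mem_inter, hX, Finset.mem_biUnion] at hv
        obtain ⟨hve, f, hf, hvf⟩ := hv
        rw [Finset.mem_biUnion]
        exact ⟨f, Finset.mem_filter.mpr ⟨hf, ⟨v, Finset.mem_inter.mpr ⟨hvf, hve⟩⟩⟩, hvf⟩
      refine le_trans (Finset.card_le_card hsub) (le_trans (Finset.card_biUnion_le) ?_)
      have hD1 : ∀ f ∈ E₀.filter (fun f => (mf f ∩ e).Nonempty), (mf f).card = 2 := by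
        intro f hf
        exact (hmf1 f (Finset.mem_filter.mp hf).1).2
      rw [Finset.sum_congr rfl hD1]
      rw [Finset.sum_const, smul_eq_mul]
      have hcount : (E₀.filter (fun f => (mf f ∩ e).Nonempty)).card ≤ D := by
        refine le_trans (Finset.card_le_card ?_) (hnb e (Finset.mem_insert_self e E₀))
        intro f hf
        rw [Finset.mem_filter] at hf
        obtain ⟨hf0, v, hv⟩ := hf
        rw [Finset.mem_inter] at hv
        refine Finset.mem_filter.mpr ⟨Finset.mem_insert_of_mem hf0, ?_, ?_⟩
        · rintro rfl; exact he hf0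
        · exact ⟨v, Finset.mem_inter.mpr ⟨hv.2, (hmf1 f hf0).1 hv.1⟩⟩
      omega
    have hfree : 2 ≤ (e \ X).card := by
      have h1 : e \ X = e \ (e ∩ X) := (Finset.sdiff_inter_self_left e X).symm
      have h2 : (e \ (e ∩ X)).card = e.card - (e ∩ X).card :=
        Finset.card_sdiff_of_subset Finset.inter_subset_left
      have h3 := hunif e (Finset.mem_insert_self e E₀)
      rw [h1, h2]
      omega
    obtain ⟨u, hu, w, hw, huw⟩ := Finset.one_lt_card.mp (show 1 < (e \ X).card by omega)
    refine ⟨Function.update mf e {u, w}, ?_, ?_⟩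
    · intro f hf
      rcases Finset.mem_insert.mp hf with rfl | hf0
      · rw [Function.update_self]
        constructor
        · intro z hz
          rcases Finset.mem_insert.mp hz with rfl | hz
          · exact (Finset.mem_sdiff.mp hu).1
          · rw [Finset.mem_singleton] at hz; subst hz
            exact (Finset.mem_sdiff.mp hw).1
        · exact Finset.card_pair huw
      · rw [Function.update_of_ne (by rintro rfl; exact he hf0)]
        exact hmf1 f hf0
    · intro f hf g hg
      have hdisj : ∀ f' ∈ E₀, Disjoint ({u, w} : Finset V) (mf f') := by
        intro f' hf'
        rw [Finset.disjoint_left]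
        intro z hz hzf'
        have hzX : z ∈ X := Finset.mem_biUnion.mpr ⟨f', hf', hzf'⟩
        rcases Finset.mem_insert.mp hz with rfl | hz
        · exact (Finset.mem_sdiff.mp hu).2 hzX
        · rw [Finset.mem_singleton] at hz; subst hz
          exact (Finset.mem_sdiff.mp hw).2 hzX
      rcases Finset.mem_insert.mp hf with rfl | hf0 <;> rcases Finset.mem_insert.mp hg with rfl | hg0
      · left; rfl
      · right
        rw [Function.update_self, Function.update_of_ne (by rintro rfl; exact he hg0)]
        exact hdisj g hg0
      · right
        rw [Function.update_self, Function.update_of_ne (by rintro rfl; exact he hf0)]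
        exact (hdisj f hf0).symm
      · rw [Function.update_of_ne (by rintro rfl; exact he hf0),
            Function.update_of_ne (by rintro rfl; exact he hg0)]
        exact hmf2 f hf0 g hg0

lemma matching_coloring {V : Type} [DecidableEq V] :
    ∀ (k : ℕ) (S : Finset V) (M : Finset (Finset V)), S.card ≤ k →
    (∀ p ∈ M, p.card = 2) → (∀ p ∈ M, p ⊆ S) →
    (∀ p ∈ M, ∀ q ∈ M, p = q ∨ Disjoint p q) →
    ∃ c : V → Bool, (∀ p ∈ M, ∃ v ∈ p, ∃ w ∈ p, c v ≠ c w) ∧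
      ((((S.filter fun v => c v = true).card : ℤ)
        - ((S.filter fun v => c v = false).card : ℤ)).natAbs ≤ 1) := by
  intro k
  induction k with
  | zero =>
    intro S M hS hM2 hMS hMd
    have hSempty : S = ∅ := Finset.card_eq_zero.mp (Nat.le_zero.mp hS)
    subst hSempty
    have hMempty : M = ∅ := by
      rw [Finset.eq_empty_iff_forall_notMem]
      intro p hp
      have h2 := hM2 p hp
      have h0 := Finset.card_le_card (hMS p hp)
      rw [Finset.card_empty] at h0
      omega
    subst hMempty
    exact ⟨fun _ => true, by simp, by simp⟩
  | succ k ih =>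
    intro S M hS hM2 hMS hMd
    by_cases hcase : S.card ≤ 1
    · -- base: color everything true
      have hMempty : M = ∅ := by
        rw [Finset.eq_empty_iff_forall_notMem]
        intro p hp
        have h2 := hM2 p hp
        have := Finset.card_le_card (hMS p hp)
        omega
      subst hMempty
      refine ⟨fun _ => true, by simp, ?_⟩
      have h0 : (S.filter fun _ => (true : Bool) = true) = S := by
        apply Finset.filter_true_of_mem; intros; rfl
      have h1 : (S.filter fun _ => (true : Bool) = false) = ∅ := by
        apply Finset.filter_false_of_mem; intros; simp
      rw [h0, h1]
      simp only [Finset.card_empty, Nat.cast_zero, sub_zero, Int.natAbs_natCast]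
      omega
    · push_neg at hcase
      -- pick a pair: from M if possible, else any two vertices of S
      have hpair : ∃ a b : V, a ≠ b ∧ a ∈ S ∧ b ∈ S ∧
          (∀ p ∈ M, ({a, b} : Finset V) = p ∨ Disjoint ({a, b} : Finset V) p) ∧
          (M.Nonempty → ({a, b} : Finset V) ∈ M) := by
        rcases M.eq_empty_or_nonempty with rfl | ⟨p, hp⟩
        · obtain ⟨a, ha, b, hb, hab⟩ := Finset.one_lt_card.mp hcase
          exact ⟨a, b, hab, ha, hb, by simp, by simp [Finset.not_nonempty_empty]⟩
        · obtain ⟨a, b, hab, hpab⟩ := Finset.card_eq_two.mp (hM2 p hp)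
          subst hpab
          refine ⟨a, b, hab, hMS _ hp (by simp), hMS _ hp (by simp), ?_, fun _ => hp⟩
          intro q hq
          rcases hMd _ hp q hq with rfl | hd
          · exact Or.inl rfl
          · exact Or.inr hd
      obtain ⟨a, b, hab, haS, hbS, hMab, hMne⟩ := hpair
      set S' := S \ {a, b} with hS'
      set M' := M.erase {a, b} with hM'
      have hS'card : S'.card ≤ k := by
        have : ({a,b} : Finset V) ⊆ S := by
          intro z hz; rcases Finset.mem_insert.mp hz with rfl | hz
          · exact haS
          · rw [Finset.mem_singleton] at hz; subst hz; exact hbS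
        have h2 := Finset.card_sdiff_of_subset this
        have h3 : ({a,b} : Finset V).card = 2 := Finset.card_pair hab
        rw [hS', h2, h3]
        omega
      obtain ⟨c, hc1, hc2⟩ := ih S' M' hS'card
        (fun p hp => hM2 p (Finset.erase_subset _ _ hp))
        (fun p hp => by
          have hpM := Finset.erase_subset _ _ hp
          have hpS := hMS p hpM
          have hne : ({a,b} : Finset V) ≠ p := fun h => (Finset.mem_erase.mp hp).1 h.symm
          have hdisj : Disjoint ({a,b} : Finset V) p := (hMab p hpM).resolve_left hne
          intro z hz
          rw [hS', Finset.mem_sdiff]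
          exact ⟨hpS hz, fun hz' => (Finset.disjoint_right.mp hdisj) hz hz'⟩)
        (fun p hp q hq => hMd p (Finset.erase_subset _ _ hp) q (Finset.erase_subset _ _ hq))
      set c' := Function.update (Function.update c a true) b false with hc'
      have hc'a : c' a = true := by
        rw [hc', Function.update_of_ne hab, Function.update_self]
      have hc'b : c' b = false := by
        rw [hc', Function.update_self]
      have hc'other : ∀ z, z ≠ a → z ≠ b → c' z = c z := by
        intro z hza hzb
        rw [hc', Function.update_of_ne hzb, Function.update_of_ne hza]
      refine ⟨c', ?_, ?_⟩
      · intro p hp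
        by_cases hpab : p = {a, b}
        · subst hpab
          exact ⟨a, by simp, b, by simp [hab], by rw [hc'a, hc'b]; simp⟩
        · have hpM' : p ∈ M' := Finset.mem_erase.mpr ⟨fun h => hpab h, hp⟩
          obtain ⟨v, hv, w, hw, hvw⟩ := hc1 p hpM'
          have hd : Disjoint ({a,b} : Finset V) p :=
            (hMab p hp).resolve_left (fun h => hpab h.symm)
          have hva : v ≠ a := fun h => (Finset.disjoint_right.mp hd) hv (by rw [h]; simp)
          have hvb : v ≠ b := fun h => (Finset.disjoint_right.mp hd) hv (by rw [h]; simp)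
          have hwa : w ≠ a := fun h => (Finset.disjoint_right.mp hd) hw (by rw [h]; simp)
          have hwb : w ≠ b := fun h => (Finset.disjoint_right.mp hd) hw (by rw [h]; simp)
          exact ⟨v, hv, w, hw, by rw [hc'other v hva hvb, hc'other w hwa hwb]; exact hvw⟩
      · -- balance
        have hSeq : S = S' ∪ {a, b} := by
          rw [hS', Finset.sdiff_union_of_subset]
          intro z hz; rcases Finset.mem_insert.mp hz with rfl | hz
          · exact haS
          · rw [Finset.mem_singleton] at hz; subst hz; exact hbS
        have hdisj : Disjoint S' ({a,b} : Finset V) := Finset.sdiff_disjoint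
        have hfc : ∀ t : Bool, S'.filter (fun v => c' v = t) = S'.filter (fun v => c v = t) := by
          intro t
          apply Finset.filter_congr
          intro v hv
          rw [hS', Finset.mem_sdiff] at hv
          have hva : v ≠ a := fun h => hv.2 (by rw [h]; simp)
          have hvb : v ≠ b := fun h => hv.2 (by rw [h]; simp)
          simp [hc'other v hva hvb]
        have hpt : ({a,b} : Finset V).filter (fun v => c' v = true) = {a} := by
          ext z
          simp only [Finset.mem_filter, Finset.mem_insert, Finset.mem_singleton]
          constructor
          · rintro ⟨rfl | rfl, h⟩
            · rfl
            · rw [hc'b] at h; cases h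
          · rintro rfl; exact ⟨Or.inl rfl, hc'a⟩
        have hpf : ({a,b} : Finset V).filter (fun v => c' v = false) = {b} := by
          ext z
          simp only [Finset.mem_filter, Finset.mem_insert, Finset.mem_singleton]
          constructor
          · rintro ⟨rfl | rfl, h⟩
            · rw [hc'a] at h; cases h
            · rfl
          · rintro rfl; exact ⟨Or.inr rfl, hc'b⟩
        have hsplit : ∀ t : Bool, (S.filter fun v => c' v = t).card
            = (S'.filter fun v => c v = t).card + 1 := by
          intro t
          rw [hSeq, Finset.filter_union, Finset.card_union_of_disjoint
            (Finset.disjoint_filter_filter hdisj)]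
          rw [hfc t]
          congr 1
          cases t
          · rw [hpf]; simp
          · rw [hpt]; simp
        rw [hsplit true, hsplit false]
        push_cast
        push_cast at hc2
        omega


lemma pow_third (d : ℕ) : (1/3 : ℝ) ≤ (1 - 1/((d:ℝ)+2))^d := by
  have hd2 : (0:ℝ) < (d:ℝ)+2 := by positivity
  have hd1 : (0:ℝ) < (d:ℝ)+1 := by positivity
  have hbase : (1 : ℝ) - 1/((d:ℝ)+2) = ((d:ℝ)+1)/((d:ℝ)+2) := by field_simp; ring
  have hb0 : (0:ℝ) < ((d:ℝ)+1)/((d:ℝ)+2) := by positivity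
  have hb1 : ((d:ℝ)+1)/((d:ℝ)+2) ≤ 1 := by
    rw [div_le_one hd2]; linarith
  have hexp : ((d:ℝ)+2)/((d:ℝ)+1) ≤ Real.exp (1/((d:ℝ)+1)) := by
    have h := Real.add_one_le_exp (1/((d:ℝ)+1))
    calc ((d:ℝ)+2)/((d:ℝ)+1) = 1/((d:ℝ)+1) + 1 := by field_simp; ring
      _ ≤ _ := h
  have hpow : (((d:ℝ)+2)/((d:ℝ)+1))^(d+1) ≤ Real.exp 1 := by
    calc (((d:ℝ)+2)/((d:ℝ)+1))^(d+1) ≤ (Real.exp (1/((d:ℝ)+1)))^(d+1) :=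
          pow_le_pow_left₀ (by positivity) hexp _
      _ = Real.exp (((d:ℕ)+1 : ℕ) * (1/((d:ℝ)+1))) := by
          rw [← Real.exp_nat_mul]
      _ = Real.exp 1 := by
          congr 1
          push_cast
          field_simp
  have h3 : (((d:ℝ)+2)/((d:ℝ)+1))^(d+1) ≤ 3 := by
    have := Real.exp_one_lt_d9
    linarith
  have hab : (((d:ℝ)+1)/((d:ℝ)+2))^(d+1) * (((d:ℝ)+2)/((d:ℝ)+1))^(d+1) = 1 := by
    rw [← mul_pow]
    rw [show ((d:ℝ)+1)/((d:ℝ)+2) * (((d:ℝ)+2)/((d:ℝ)+1)) = 1 by field_simp]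
    exact one_pow _
  have ha0 : (0:ℝ) ≤ (((d:ℝ)+1)/((d:ℝ)+2))^(d+1) := by positivity
  have hinv : (1/3 : ℝ) ≤ (((d:ℝ)+1)/((d:ℝ)+2))^(d+1) := by
    nlinarith [mul_le_mul_of_nonneg_left h3 ha0]
  calc (1/3 : ℝ) ≤ (((d:ℝ)+1)/((d:ℝ)+2))^(d+1) := hinv
    _ ≤ (((d:ℝ)+1)/((d:ℝ)+2))^d := pow_le_pow_of_le_one hb0.le hb1 (Nat.le_succ d)
    _ = (1 - 1/((d:ℝ)+2))^d := by rw [hbase]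

lemma num9_nat : ∀ m : ℕ, 24*(m+9)*(m+11) ≤ 2^(m+9)*(m+6) := by
  intro m
  induction m with
  | zero => norm_num
  | succ m ih =>
    have h2 : (2:ℕ)^(m+1+9) = 2*2^(m+9) := by rw [pow_succ]; ring
    calc 24*(m+1+9)*(m+1+11) ≤ 48*(m+9)*(m+11) := by nlinarith
      _ = 2*(24*(m+9)*(m+11)) := by ring
      _ ≤ 2*(2^(m+9)*(m+6)) := Nat.mul_le_mul_left _ ih
      _ = 2^(m+9)*(2*(m+6)) := by ring
      _ ≤ 2^(m+9)*(2*(m+7)) := Nat.mul_le_mul_left _ (by omega)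
      _ = 2^(m+1+9)*(m+1+6) := by rw [h2]; ring

lemma num9 (n : ℕ) (hn : 9 ≤ n) (D : ℕ) (hD : (D:ℝ) ≤ 2^(n-3)/n) :
    3*(((D + n*(D+1) : ℕ) : ℝ) + 2) ≤ 2^(n-1) := by
  have hn0 : (0:ℝ) < n := by positivity
  obtain ⟨m, rfl⟩ : ∃ m, n = m + 9 := ⟨n - 9, by omega⟩
  have hkey : (24*((m:ℝ)+9)*((m:ℝ)+11) : ℝ) ≤ 2^(m+9)*((m:ℝ)+6) := by
    exact_mod_cast num9_nat m
  have he1 : m + 9 - 3 = m + 6 := by omega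
  have he2 : m + 9 - 1 = m + 8 := by omega
  rw [he2]
  rw [he1] at hD
  have hQ : (2:ℝ)^(m+9) = 8 * 2^(m+6) := by
    rw [show m+9 = (m+6)+3 by omega, pow_add]; ring
  have hP : (2:ℝ)^(m+8) = 4 * 2^(m+6) := by
    rw [show m+8 = (m+6)+2 by omega, pow_add]; ring
  rw [hP]
  rw [hQ] at hkey
  have hDn : (D:ℝ) * ((m:ℝ)+9) ≤ 2^(m+6) := by
    have := mul_le_mul_of_nonneg_right hD (by positivity : (0:ℝ) ≤ (m:ℝ)+9)
    calc (D:ℝ) * ((m:ℝ)+9) ≤ 2^(m+6)/((m:ℝ)+9) * ((m:ℝ)+9) := by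
          push_cast at this; exact this
      _ = 2^(m+6) := by field_simp
  push_cast
  nlinarith [hDn, hkey, mul_le_mul_of_nonneg_left hDn (by positivity : (0:ℝ) ≤ (m:ℝ)+9),
    pow_pos (by norm_num : (0:ℝ) < 2) (m+6)]

lemma num8 : (1:ℝ) ≤ (1/40) * (1 - 1/40)^(44:ℕ) * 2^(7:ℕ) := by
  norm_num

lemma branchB {V : Type} [Fintype V] [DecidableEq V]
    (n : ℕ) (hn : 2 ≤ n) (E : Finset (Finset V))
    (hunif : ∀ e ∈ E, e.card = n)
    (D : ℕ)
    (hD : ∀ e ∈ E, (E.filter fun f => f ≠ e ∧ (e ∩ f).Nonempty).card ≤ D)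
    (x : ℝ) (hx0 : 0 ≤ x) (hx1 : x < 1)
    (hnum : (1:ℝ) ≤ x * (1-x)^(D + n*(D+1)) * 2^(n-1)) :
    ∃ c : V → Bool, (∀ e ∈ E, ∃ v ∈ e, ∃ w ∈ e, c v ≠ c w) ∧
      ((((Finset.univ.filter fun v => c v = true).card : ℤ)
        - ((Finset.univ.filter fun v => c v = false).card : ℤ)).natAbs ≤ 1) := by
  classical
  set N := Fintype.card V with hNdef
  set σ : V ≃ Fin N := Fintype.equivFin V with hσ
  set k := N / 2 with hkdef
  by_cases hk0 : k = 0
  · -- V has at most one vertex, E must be empty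
    have hN1 : N ≤ 1 := by omega
    have hE : E = ∅ := by
      rw [Finset.eq_empty_iff_forall_notMem]
      intro e he
      have h1 : e.card = n := hunif e he
      have h2 : e.card ≤ N := by
        rw [hNdef]; exact le_trans (Finset.card_le_card (Finset.subset_univ e)) (by
          rw [Finset.card_univ])
      omega
    subst hE
    refine ⟨fun _ => true, by simp, ?_⟩
    have h0 : (Finset.univ.filter fun _ : V => (true : Bool) = true) = Finset.univ := by
      apply Finset.filter_true_of_mem; intros; rfl
    have h1 : (Finset.univ.filter fun _ : V => (true : Bool) = false) = ∅ := by
      apply Finset.filter_false_of_mem; intros; simp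
    rw [h0, h1]
    have h2 : (Finset.univ : Finset V).card ≤ 1 := by rw [Finset.card_univ]; exact hN1
    simp only [Finset.card_empty, Nat.cast_zero, sub_zero, Int.natAbs_natCast]
    omega
  have hkpos : 0 < k := Nat.pos_of_ne_zero hk0
  have hNpos : 0 < N := by omega
  have h2kN : 2*k ≤ N := by omega
  have hN2k : N ≤ 2*k + 1 := by omega
  set idx : V → ℕ := fun v => (σ v : ℕ) with hidxdef
  have hidx : ∀ v, idx v < N := fun v => (σ v).isLt
  have hidx_inj : ∀ v w, idx v = idx w → v = w := by
    intro v w h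
    have : σ v = σ w := Fin.ext h
    exact σ.injective this
  set cf : V → Fin k := fun v => ⟨(idx v / 2) % k, Nat.mod_lt _ hkpos⟩ with hcfdef
  have hcfval : ∀ v, idx v < 2*k → (cf v : ℕ) = idx v / 2 := by
    intro v hv
    show (idx v / 2) % k = idx v / 2
    exact Nat.mod_eq_of_lt (by omega)
  set flip : ℕ → ℕ := fun j => if j % 2 = 0 then j + 1 else j - 1 with hflipdef
  have hflip_facts : ∀ j, j < 2*k → flip j < 2*k ∧ flip (flip j) = j ∧ flip j / 2 = j / 2
      ∧ flip j ≠ j := by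
    intro j hj
    by_cases h : j % 2 = 0
    · have h1 : flip j = j + 1 := if_pos h
      have h2 : (j+1) % 2 = 1 := by omega
      have h3 : flip (j+1) = j + 1 - 1 := if_neg (by omega)
      rw [h1, h3]
      omega
    · have h1 : flip j = j - 1 := if_neg h
      have h2 : (j-1) % 2 = 0 := by omega
      have h3 : flip (j-1) = j - 1 + 1 := if_pos h2
      rw [h1, h3]
      omega
  set pt : V → V := fun v => σ.symm ⟨flip (idx v) % N, Nat.mod_lt _ hNpos⟩ with hptdef
  have hpt_idx : ∀ v, idx v < 2*k → idx (pt v) = flip (idx v) := by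
    intro v hv
    have h1 : flip (idx v) < N := lt_of_lt_of_le (hflip_facts _ hv).1 h2kN
    show ((σ (σ.symm ⟨flip (idx v) % N, _⟩) : Fin N) : ℕ) = flip (idx v)
    rw [Equiv.apply_symm_apply]
    exact Nat.mod_eq_of_lt h1
  have hpt_pt : ∀ v, idx v < 2*k → pt (pt v) = v := by
    intro v hv
    apply hidx_inj
    rw [hpt_idx _ (by rw [hpt_idx _ hv]; exact (hflip_facts _ hv).1)]
    rw [hpt_idx _ hv]
    exact (hflip_facts _ hv).2.1
  set col : (Fin k → Bool) → V → Bool := fun b v =>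
    if idx v = 2*k then true
    else if idx v % 2 = 0 then b (cf v) else !(b (cf v)) with hcoldef
  have hlt2k : ∀ v, idx v ≠ 2*k → idx v < 2*k := by
    intro v hv
    have := hidx v
    omega
  have hcf_pt : ∀ v, idx v < 2*k → cf (pt v) = cf v := by
    intro v hv
    apply Fin.ext
    show (idx (pt v) / 2) % k = (idx v / 2) % k
    rw [hpt_idx _ hv, (hflip_facts _ hv).2.2.1]
  have hcol_pt : ∀ b v, idx v < 2*k → col b (pt v) = !(col b v) := by
    intro b v hv
    have hptv : idx (pt v) = flip (idx v) := hpt_idx _ hv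
    have hflt : flip (idx v) < 2*k := (hflip_facts _ hv).1
    have hne : idx (pt v) ≠ 2*k := by omega
    have hvne : idx v ≠ 2*k := by omega
    rw [hcoldef]
    simp only [if_neg hne, if_neg hvne, hcf_pt _ hv]
    by_cases h : idx v % 2 = 0
    · have h1 : flip (idx v) = idx v + 1 := if_pos h
      have h2 : idx (pt v) % 2 = 1 := by rw [hptv, h1]; omega
      rw [if_neg (by omega), if_pos h]
    · have h1 : flip (idx v) = idx v - 1 := if_neg h
      have h2 : idx (pt v) % 2 = 0 := by rw [hptv, h1]; omega
      rw [if_pos h2, if_neg h]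
      simp
  -- balance for every orientation
  have hbal : ∀ b : Fin k → Bool,
      ((((Finset.univ.filter fun v => col b v = true).card : ℤ)
        - ((Finset.univ.filter fun v => col b v = false).card : ℤ)).natAbs ≤ 1) := by
    intro b
    set Tall := Finset.univ.filter (fun v => col b v = true) with hTall
    set T := Tall.filter (fun v => idx v ≠ 2*k) with hT
    set L := Tall.filter (fun v => ¬ idx v ≠ 2*k) with hL
    set F := Finset.univ.filter (fun v => col b v = false) with hF
    have hsplit : T.card + L.card = Tall.card :=
      Finset.card_filter_add_card_filter_not _
    have hFne : ∀ v ∈ F, idx v ≠ 2*k := by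
      intro v hv h2k
      rw [hF, Finset.mem_filter] at hv
      rw [hcoldef] at hv
      simp only [if_pos h2k] at hv
      exact absurd hv.2 (by simp)
    have hTF : T.card = F.card := by
      refine Finset.card_bij' (fun v _ => pt v) (fun v _ => pt v) ?_ ?_ ?_ ?_
      · intro v hv
        rw [hT, Finset.mem_filter, hTall, Finset.mem_filter] at hv
        have hvlt : idx v < 2*k := hlt2k v hv.2
        rw [hF, Finset.mem_filter]
        refine ⟨Finset.mem_univ _, ?_⟩
        rw [hcol_pt b v hvlt, hv.1.2]
        rfl
      · intro v hv
        have hvne := hFne v hv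
        have hvlt : idx v < 2*k := hlt2k v hvne
        rw [hF, Finset.mem_filter] at hv
        rw [hT, Finset.mem_filter, hTall, Finset.mem_filter]
        have h1 : idx (pt v) = flip (idx v) := hpt_idx _ hvlt
        have h2 : flip (idx v) < 2*k := (hflip_facts _ hvlt).1
        refine ⟨⟨Finset.mem_univ _, ?_⟩, by rw [h1]; omega⟩
        rw [hcol_pt b v hvlt, hv.2]
        rfl
      · intro v hv
        rw [hT, Finset.mem_filter] at hv
        exact hpt_pt v (hlt2k v hv.2)
      · intro v hv
        exact hpt_pt v (hlt2k v (hFne v hv))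
    have hL1 : L.card ≤ 1 := by
      rw [Finset.card_le_one]
      intro v hv w hw
      rw [hL, Finset.mem_filter] at hv hw
      apply hidx_inj
      have h1 := hv.2
      have h2 := hw.2
      omega
    show ((Tall.card : ℤ) - (F.card : ℤ)).natAbs ≤ 1
    omega
  -- events
  set A : Finset V → Finset (Fin k → Bool) := fun e => Finset.univ.filter
      (fun b => (∀ v ∈ e, col b v = true) ∨ (∀ v ∈ e, col b v = false)) with hAdef
  set C : Finset V → Finset (Fin k) := fun e =>
      (e.filter (fun v => idx v ≠ 2*k)).image cf with hCdef
  set g : Finset V → Fin k → Bool := fun e i =>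
      decide (σ.symm ⟨2*(i:ℕ) % N, Nat.mod_lt _ hNpos⟩ ∈ e) with hgdef
  have hu_idx : ∀ i : Fin k, idx (σ.symm ⟨2*(i:ℕ) % N, Nat.mod_lt _ hNpos⟩) = 2*(i:ℕ) := by
    intro i
    show ((σ (σ.symm _) : Fin N) : ℕ) = _
    rw [Equiv.apply_symm_apply]
    exact Nat.mod_eq_of_lt (by have := i.isLt; omega)
  have hgval : ∀ (e : Finset V),
      (∀ v ∈ e, ∀ w ∈ e, v ≠ w → idx v ≠ 2*k → idx w ≠ 2*k → cf v ≠ cf w) →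
      ∀ v ∈ e, idx v ≠ 2*k → g e (cf v) = decide (idx v % 2 = 0) := by
    intro e hinj v hv hvne
    have hvlt := hlt2k v hvne
    have hcv : (cf v : ℕ) = idx v / 2 := hcfval v hvlt
    have huidx : idx (σ.symm ⟨2*((cf v):ℕ) % N, Nat.mod_lt _ hNpos⟩) = 2 * ((cf v) : ℕ) :=
      hu_idx (cf v)
    have hgrfl : g e (cf v) = decide (σ.symm ⟨2*((cf v):ℕ) % N, Nat.mod_lt _ hNpos⟩ ∈ e) := rfl
    by_cases hpar : idx v % 2 = 0
    · have huv : σ.symm ⟨2*((cf v):ℕ) % N, Nat.mod_lt _ hNpos⟩ = v :=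
        hidx_inj _ _ (by rw [huidx, hcv]; omega)
      rw [hgrfl, huv]
      simp [hv, hpar]
    · have hflipv : flip (idx v) = idx v - 1 := if_neg hpar
      have huptv : σ.symm ⟨2*((cf v):ℕ) % N, Nat.mod_lt _ hNpos⟩ = pt v :=
        hidx_inj _ _ (by rw [huidx, hcv, hpt_idx v hvlt, hflipv]; omega)
      have hptnotin : pt v ∉ e := by
        intro hmem
        have h1 : idx (pt v) = flip (idx v) := hpt_idx v hvlt
        have h2 : flip (idx v) ≠ idx v := (hflip_facts _ hvlt).2.2.2
        have hne : pt v ≠ v := fun h => h2 (by rw [← h1, h])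
        have h3 : idx (pt v) ≠ 2*k := by
          have := (hflip_facts _ hvlt).1
          rw [h1]; omega
        exact hinj (pt v) hmem v hv hne h3 hvne (hcf_pt v hvlt)
      rw [hgrfl, huptv]
      simp [hptnotin, hpar]
  have hcol_eval : ∀ (b : Fin k → Bool) v, idx v ≠ 2*k →
      col b v = if idx v % 2 = 0 then b (cf v) else !(b (cf v)) := by
    intro b v hvne
    rw [hcoldef]
    simp only [if_neg hvne]
  -- determinedness
  have hdet : ∀ e ∈ E, ∀ b b' : Fin k → Bool, (∀ i ∈ C e, b i = b' i) →
      (b ∈ A e ↔ b' ∈ A e) := by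
    intro e he b b' hbb'
    have hcol : ∀ v ∈ e, col b v = col b' v := by
      intro v hv
      by_cases hvne : idx v = 2*k
      · rw [hcoldef]; simp only [if_pos hvne]
      · have hmem : cf v ∈ C e := by
          rw [hCdef]
          exact Finset.mem_image.mpr ⟨v, Finset.mem_filter.mpr ⟨hv, hvne⟩, rfl⟩
        have hb := hbb' _ hmem
        rw [hcoldef]; simp only [if_neg hvne, hb]
    rw [hAdef]
    simp only [Finset.mem_filter, Finset.mem_univ, true_and]
    constructor <;> intro h
    · refine h.imp (fun h1 v hv => ?_) (fun h1 v hv => ?_)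
      · rw [← hcol v hv]; exact h1 v hv
      · rw [← hcol v hv]; exact h1 v hv
    · refine h.imp (fun h1 v hv => ?_) (fun h1 v hv => ?_)
      · rw [hcol v hv]; exact h1 v hv
      · rw [hcol v hv]; exact h1 v hv
  -- event cardinality bound
  have hAcard : ∀ e ∈ E, (A e).card * 2^(n-1) ≤ 2^k := by
    intro e he
    by_cases hcoll : ∃ v ∈ e, ∃ w ∈ e, v ≠ w ∧ idx v ≠ 2*k ∧ idx w ≠ 2*k ∧ cf v = cf w
    · -- a pair inside e: event is empty
      obtain ⟨v, hv, w, hw, hvw, hvne, hwne, hcfvw⟩ := hcoll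
      have hAe : A e = ∅ := by
        rw [Finset.eq_empty_iff_forall_notMem]
        intro b hb
        rw [hAdef, Finset.mem_filter] at hb
        have hvlt := hlt2k v hvne
        have hwlt := hlt2k w hwne
        have hdiv : idx v / 2 = idx w / 2 := by
          have h1 := hcfval _ hvlt
          have h2 := hcfval _ hwlt
          have h3 : (cf v : ℕ) = (cf w : ℕ) := by rw [hcfvw]
          omega
        have hidxne : idx v ≠ idx w := fun h => hvw (hidx_inj _ _ h)
        have hcolne : col b v = !(col b w) := by
          rw [hcol_eval b v hvne, hcol_eval b w hwne, hcfvw]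
          by_cases hp : idx v % 2 = 0
          · have hp2 : ¬ (idx w % 2 = 0) := by omega
            rw [if_pos hp, if_neg hp2]
            simp
          · have hp2 : idx w % 2 = 0 := by omega
            rw [if_neg hp, if_pos hp2]
        rcases hb.2 with hmono | hmono
        · have h1 := hmono v hv
          have h2 := hmono w hw
          rw [h1, h2] at hcolne
          simp at hcolne
        · have h1 := hmono v hv
          have h2 := hmono w hw
          rw [h1, h2] at hcolne
          simp at hcolne
      rw [hAe]
      simp
    · push_neg at hcoll
      have hinj : ∀ v ∈ e, ∀ w ∈ e, v ≠ w → idx v ≠ 2*k → idx w ≠ 2*k → cf v ≠ cf w := hcoll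
      have hgv := hgval e hinj
      have hCcard : (C e).card = (e.filter (fun v => idx v ≠ 2*k)).card := by
        rw [hCdef]
        apply Finset.card_image_of_injOn
        intro v hv w hw hcfeq
        by_contra hne
        rw [Finset.mem_coe, Finset.mem_filter] at hv hw
        exact hinj v hv.1 w hw.1 hne hv.2 hw.2 hcfeq
      have hCk : (C e).card ≤ k := by
        have := Finset.card_le_univ (C e)
        rwa [Fintype.card_fin] at this
      -- mono events are contained in cylinders
      have hsubT : ∀ b ∈ Finset.univ.filter (fun b : Fin k → Bool => ∀ v ∈ e, col b v = true),
          ∀ i ∈ C e, b i = g e i := by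
        intro b hb i hi
        rw [Finset.mem_filter] at hb
        rw [hCdef] at hi
        obtain ⟨v, hv, hvi⟩ := Finset.mem_image.mp hi
        rw [Finset.mem_filter] at hv
        have hmono := hb.2 v hv.1
        rw [hcol_eval b v hv.2] at hmono
        subst hvi
        rw [hgv v hv.1 hv.2]
        by_cases hp : idx v % 2 = 0
        · rw [if_pos hp] at hmono
          rw [hmono]
          simp [hp]
        · rw [if_neg hp] at hmono
          have : b (cf v) = false := by
            cases hbc : b (cf v)
            · rfl
            · rw [hbc] at hmono; simp at hmono
          rw [this]
          simp [hp]
      have hsubF : ∀ b ∈ Finset.univ.filter (fun b : Fin k → Bool => ∀ v ∈ e, col b v = false),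
          ∀ i ∈ C e, b i = !(g e i) := by
        intro b hb i hi
        rw [Finset.mem_filter] at hb
        rw [hCdef] at hi
        obtain ⟨v, hv, hvi⟩ := Finset.mem_image.mp hi
        rw [Finset.mem_filter] at hv
        have hmono := hb.2 v hv.1
        rw [hcol_eval b v hv.2] at hmono
        subst hvi
        rw [hgv v hv.1 hv.2]
        by_cases hp : idx v % 2 = 0
        · rw [if_pos hp] at hmono
          rw [hmono]
          simp [hp]
        · rw [if_neg hp] at hmono
          have : b (cf v) = true := by
            cases hbc : b (cf v)
            · rw [hbc] at hmono; simp at hmono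
            · rfl
          rw [this]
          simp [hp]
      by_cases hlf : ∃ v ∈ e, idx v = 2*k
      · -- leftover vertex in e : only mono-true possible
        obtain ⟨l, hle, hl⟩ := hlf
        have hfe : e.filter (fun v => idx v ≠ 2*k) = e.erase l := by
          ext v
          rw [Finset.mem_filter, Finset.mem_erase]
          constructor
          · rintro ⟨hv1, hv2⟩
            exact ⟨fun h => hv2 (by rw [h, hl]), hv1⟩
          · rintro ⟨hv1, hv2⟩
            exact ⟨hv2, fun h => hv1 (hidx_inj _ _ (by rw [h, hl]))⟩
        have hCn : (C e).card = n - 1 := by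
          rw [hCcard, hfe, Finset.card_erase_of_mem hle, hunif e he]
        have hAsub : A e ⊆ Finset.univ.filter (fun b : Fin k → Bool => ∀ i ∈ C e, b i = g e i) := by
          intro b hb
          rw [hAdef, Finset.mem_filter] at hb
          rcases hb.2 with hmono | hmono
          · exact hsubT b (Finset.mem_filter.mpr ⟨Finset.mem_univ _, hmono⟩) |>
              (fun h => Finset.mem_filter.mpr ⟨Finset.mem_univ _, h⟩)
          · exfalso
            have := hmono l hle
            rw [hcoldef] at this
            simp only [if_pos hl] at this
            exact absurd this (by simp)
        have hcount := cylinder_count k (C e) (g e)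
        have h1 : (A e).card ≤ 2^(k - (n-1)) := by
          rw [← hCn, ← hcount]
          exact Finset.card_le_card hAsub
        have h2 : n - 1 ≤ k := by rw [← hCn]; exact hCk
        calc (A e).card * 2^(n-1) ≤ 2^(k-(n-1)) * 2^(n-1) :=
              Nat.mul_le_mul_right _ h1
          _ = 2^k := by rw [← pow_add]; congr 1; exact Nat.sub_add_cancel h2
      · -- no leftover vertex in e
        push_neg at hlf
        have hfe : e.filter (fun v => idx v ≠ 2*k) = e :=
          Finset.filter_true_of_mem (fun v hv => hlf v hv)
        have hCn : (C e).card = n := by rw [hCcard, hfe, hunif e he]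
        have hAsub : A e ⊆
            (Finset.univ.filter (fun b : Fin k → Bool => ∀ i ∈ C e, b i = g e i)) ∪
            (Finset.univ.filter (fun b : Fin k → Bool => ∀ i ∈ C e, b i = !(g e i))) := by
          intro b hb
          rw [hAdef, Finset.mem_filter] at hb
          rcases hb.2 with hmono | hmono
          · apply Finset.mem_union_left
            exact Finset.mem_filter.mpr ⟨Finset.mem_univ _,
              hsubT b (Finset.mem_filter.mpr ⟨Finset.mem_univ _, hmono⟩)⟩
          · apply Finset.mem_union_right
            exact Finset.mem_filter.mpr ⟨Finset.mem_univ _,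
              hsubF b (Finset.mem_filter.mpr ⟨Finset.mem_univ _, hmono⟩)⟩
        have hcount1 := cylinder_count k (C e) (g e)
        have hcount2 := cylinder_count k (C e) (fun i => !(g e i))
        have h1 : (A e).card ≤ 2^(k - n) + 2^(k - n) := by
          calc (A e).card ≤ _ := Finset.card_le_card hAsub
            _ ≤ _ + _ := Finset.card_union_le _ _
            _ = 2^(k-n) + 2^(k-n) := by rw [hcount1, hcount2, hCn]
        have h2 : n ≤ k := by rw [← hCn]; exact hCk
        have hn1 : 1 ≤ n := le_trans (by norm_num) hn
        calc (A e).card * 2^(n-1) ≤ (2^(k-n) + 2^(k-n)) * 2^(n-1) :=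
              Nat.mul_le_mul_right _ h1
          _ = 2^(k-n) * (2^(n-1) * 2) := by ring
          _ = 2^(k-n) * 2^(n-1+1) := by rw [pow_succ]
          _ = 2^(k-n) * 2^n := by congr 2; exact Nat.sub_add_cancel hn1
          _ = 2^k := by rw [← pow_add]; congr 1; exact Nat.sub_add_cancel h2
  -- degree bound
  have hdeg : ∀ u : V, (E.filter (fun f => u ∈ f)).card ≤ D + 1 := by
    intro u
    rcases (E.filter (fun f => u ∈ f)).eq_empty_or_nonempty with h | h
    · rw [h]; simp
    · obtain ⟨e₀, he₀⟩ := h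
      rw [Finset.mem_filter] at he₀
      have hsub : E.filter (fun f => u ∈ f) ⊆
          insert e₀ (E.filter (fun f => f ≠ e₀ ∧ (e₀ ∩ f).Nonempty)) := by
        intro f hf
        rw [Finset.mem_filter] at hf
        by_cases hfe : f = e₀
        · subst hfe; exact Finset.mem_insert_self _ _
        · exact Finset.mem_insert_of_mem (Finset.mem_filter.mpr
            ⟨hf.1, hfe, ⟨u, Finset.mem_inter.mpr ⟨he₀.2, hf.2⟩⟩⟩)
      calc (E.filter (fun f => u ∈ f)).card ≤ _ := Finset.card_le_card hsub
        _ ≤ (E.filter (fun f => f ≠ e₀ ∧ (e₀ ∩ f).Nonempty)).card + 1 :=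
            Finset.card_insert_le _ _
        _ ≤ D + 1 := by have := hD e₀ he₀.1; omega
  -- dependency bound
  have hdep : ∀ e ∈ E, (E.filter (fun f => f ≠ e ∧ (C f ∩ C e).Nonempty)).card
      ≤ D + n*(D+1) := by
    intro e he
    have hsub : E.filter (fun f => f ≠ e ∧ (C f ∩ C e).Nonempty) ⊆
        (E.filter (fun f => f ≠ e ∧ (e ∩ f).Nonempty)) ∪
          e.biUnion (fun v => E.filter (fun f => pt v ∈ f)) := by
      intro f hf
      rw [Finset.mem_filter] at hf
      obtain ⟨hfE, hfne, i, hi⟩ := hf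
      rw [Finset.mem_inter] at hi
      obtain ⟨hif, hie⟩ := hi
      rw [hCdef] at hif hie
      obtain ⟨w, hw, hwi⟩ := Finset.mem_image.mp hif
      obtain ⟨v, hv, hvi⟩ := Finset.mem_image.mp hie
      rw [Finset.mem_filter] at hw hv
      have hvlt := hlt2k _ hv.2
      have hwlt := hlt2k _ hw.2
      have hdiv : idx w / 2 = idx v / 2 := by
        have h1 := hcfval _ hvlt
        have h2 := hcfval _ hwlt
        have h3 : (cf w : ℕ) = (cf v : ℕ) := by rw [hwi, hvi]
        omega
      by_cases hsame : idx w = idx v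
      · have hweq : w = v := hidx_inj _ _ hsame
        subst hweq
        apply Finset.mem_union_left
        exact Finset.mem_filter.mpr ⟨hfE, hfne, ⟨w, Finset.mem_inter.mpr ⟨hv.1, hw.1⟩⟩⟩
      · have hwflip : idx w = flip (idx v) := by
          by_cases hp : idx v % 2 = 0
          · rw [show flip (idx v) = idx v + 1 from if_pos hp]; omega
          · rw [show flip (idx v) = idx v - 1 from if_neg hp]; omega
        have hwpt : w = pt v := hidx_inj _ _ (by rw [hwflip, hpt_idx v hvlt])
        apply Finset.mem_union_right
        rw [Finset.mem_biUnion]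
        exact ⟨v, hv.1, Finset.mem_filter.mpr ⟨hfE, by rw [← hwpt]; exact hw.1⟩⟩
    calc (E.filter (fun f => f ≠ e ∧ (C f ∩ C e).Nonempty)).card
        ≤ _ := Finset.card_le_card hsub
      _ ≤ _ + _ := Finset.card_union_le _ _
      _ ≤ D + n*(D+1) := by
          have h1 := hD e he
          have h2 : (e.biUnion (fun v => E.filter (fun f => pt v ∈ f))).card ≤ n*(D+1) := by
            calc (e.biUnion (fun v => E.filter (fun f => pt v ∈ f))).card
                ≤ ∑ v ∈ e, (E.filter (fun f => pt v ∈ f)).card := Finset.card_biUnion_le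
              _ ≤ ∑ _v ∈ e, (D+1) := Finset.sum_le_sum (fun v _ => hdeg (pt v))
              _ = n * (D+1) := by rw [Finset.sum_const, smul_eq_mul, hunif e he]
          omega
  -- apply the local lemma
  have hp : ∀ e ∈ E, ((A e).card : ℝ) ≤ x * (1 - x) ^ (D + n*(D+1)) * 2 ^ k := by
    intro e he
    have hA2 : ((A e).card : ℝ) * 2^(n-1) ≤ 2^k := by
      have := hAcard e he
      exact_mod_cast this
    have hxp : (0:ℝ) ≤ x * (1-x)^(D + n*(D+1)) := by
      apply mul_nonneg hx0
      apply pow_nonneg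
      linarith
    nlinarith [mul_le_mul_of_nonneg_left hA2 hxp,
      mul_le_mul_of_nonneg_right hnum (Nat.cast_nonneg ((A e).card) : (0:ℝ) ≤ ((A e).card : ℝ))]
  obtain ⟨b, hb⟩ := lll_count E A C hdet x hx0 hx1 (D + n*(D+1)) hp hdep
  refine ⟨col b, ?_, hbal b⟩
  intro e he
  have hbe := hb e he
  rw [hAdef, Finset.mem_filter] at hbe
  push_neg at hbe
  have hbe2 := hbe (Finset.mem_univ _)
  obtain ⟨⟨v, hv, hvc⟩, w, hw, hwc⟩ := hbe2
  refine ⟨v, hv, w, hw, ?_⟩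
  intro hcontra
  cases hcv : col b v
  · rw [hcv] at hcontra; exact hwc hcontra.symm
  · exact hvc hcv


/-- Every `n`-uniform hypergraph with maximum neighborhood size at most
`2^(n-3)/n` has a proper halving 2-coloring: no hyperedge is monochromatic and
the two color classes differ in size by at most 1. -/
theorem proper_halving_of_small_neighborhood {V : Type} [Fintype V] [DecidableEq V]
    (n : ℕ) (hn : 2 ≤ n) (E : Finset (Finset V))
    (hunif : ∀ e ∈ E, e.card = n)
    (hnbhd : ∀ e ∈ E, (((E.filter fun f => f ≠ e ∧ (e ∩ f).Nonempty).card : ℝ))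
      ≤ (2 : ℝ) ^ ((n : ℤ) - 3) / n) :
    ∃ c : V → Bool,
      (∀ e ∈ E, ∃ v ∈ e, ∃ w ∈ e, c v ≠ c w) ∧
      ((((Finset.univ.filter fun v => c v = true).card : ℤ)
        - ((Finset.univ.filter fun v => c v = false).card : ℤ)).natAbs ≤ 1) := by
  classical
  by_cases hn7 : n ≤ 7
  · -- small uniformity: greedy internal pairs
    have hDA : ∃ DA : ℕ, 2*DA + 2 ≤ n ∧
        ∀ e ∈ E, (E.filter fun f => f ≠ e ∧ (e ∩ f).Nonempty).card ≤ DA := by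
      by_cases hn5 : n ≤ 5
      · refine ⟨0, by omega, ?_⟩
        intro e he
        have h := hnbhd e he
        have hlt : ((E.filter fun f => f ≠ e ∧ (e ∩ f).Nonempty).card : ℝ) < 0 + 1 := by
          refine lt_of_le_of_lt h ?_
          interval_cases n <;> norm_num
        have : (E.filter fun f => f ≠ e ∧ (e ∩ f).Nonempty).card < 0 + 1 := by
          exact_mod_cast hlt
        omega
      · refine ⟨2, by omega, ?_⟩
        intro e he
        have h := hnbhd e he
        have hlt : ((E.filter fun f => f ≠ e ∧ (e ∩ f).Nonempty).card : ℝ) < 2 + 1 := by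
          refine lt_of_le_of_lt h ?_
          interval_cases n <;> norm_num
        have : (E.filter fun f => f ≠ e ∧ (e ∩ f).Nonempty).card < 2 + 1 := by
          exact_mod_cast hlt
        omega
    obtain ⟨DA, hDA2, hDAb⟩ := hDA
    obtain ⟨mf, hmf1, hmf2⟩ :=
      greedy_pairs n DA hDA2 E (fun e he => le_of_eq (hunif e he).symm) hDAb
    set M := E.image mf with hM
    have hM2 : ∀ p ∈ M, p.card = 2 := by
      intro p hp
      obtain ⟨e, he, rfl⟩ := Finset.mem_image.mp hp
      exact (hmf1 e he).2
    have hMS : ∀ p ∈ M, p ⊆ Finset.univ := fun p _ => Finset.subset_univ p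
    have hMd : ∀ p ∈ M, ∀ q ∈ M, p = q ∨ Disjoint p q := by
      intro p hp q hq
      obtain ⟨e, he, rfl⟩ := Finset.mem_image.mp hp
      obtain ⟨f, hf, rfl⟩ := Finset.mem_image.mp hq
      exact hmf2 e he f hf
    obtain ⟨c, hc1, hc2⟩ :=
      matching_coloring (Finset.univ : Finset V).card Finset.univ M le_rfl hM2 hMS hMd
    refine ⟨c, ?_, hc2⟩
    intro e he
    obtain ⟨v, hv, w, hw, hvw⟩ := hc1 (mf e) (Finset.mem_image_of_mem mf he)
    exact ⟨v, (hmf1 e he).1 hv, w, (hmf1 e he).1 hw, hvw⟩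
  · -- large uniformity: local lemma
    push_neg at hn7
    have hn8 : 8 ≤ n := hn7
    have hn3 : 3 ≤ n := by omega
    have hzp : (2:ℝ)^((n:ℤ)-3) = 2^(n-3 : ℕ) := by
      rw [show (n:ℤ)-3 = ((n-3 : ℕ) : ℤ) by omega]
      exact zpow_natCast 2 (n-3)
    set Df := Nat.floor ((2:ℝ)^(n-3:ℕ)/n) with hDf
    have hDle : ∀ e ∈ E, (E.filter fun f => f ≠ e ∧ (e ∩ f).Nonempty).card ≤ Df := by
      intro e he
      apply Nat.le_floor
      rw [← hzp]
      exact hnbhd e he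
    have hnR : (0:ℝ) < n := by positivity
    have hDr : (Df:ℝ) ≤ 2^(n-3:ℕ)/n := Nat.floor_le (by positivity)
    by_cases hne8 : n = 8
    · subst hne8
      have hD4 : Df ≤ 4 := by
        have h4 : (Df : ℝ) ≤ 4 := le_trans hDr (by norm_num)
        exact_mod_cast h4
      refine branchB 8 (by norm_num) E hunif Df hDle (1/40) (by norm_num) (by norm_num) ?_
      have hd44 : Df + 8*(Df+1) ≤ 44 := by omega
      have hpow : ((1:ℝ)-1/40)^(44:ℕ) ≤ (1-1/40)^(Df+8*(Df+1)) :=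
        pow_le_pow_of_le_one (by norm_num) (by norm_num) hd44
      calc (1:ℝ) ≤ (1/40) * (1-1/40)^(44:ℕ) * 2^(7:ℕ) := num8
        _ ≤ (1/40) * (1-1/40)^(Df+8*(Df+1)) * 2^(7:ℕ) := by
            have h1 : (0:ℝ) ≤ 1/40 := by norm_num
            have h2 : (0:ℝ) ≤ 2^(7:ℕ) := by norm_num
            nlinarith [hpow]
    · have hn9 : 9 ≤ n := by omega
      set d := Df + n*(Df+1) with hd
      have h3d : 3*((d:ℝ)+2) ≤ 2^(n-1:ℕ) := by
        have := num9 n hn9 Df hDr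
        exact_mod_cast this
      have hd2 : (0:ℝ) < (d:ℝ)+2 := by positivity
      refine branchB n hn E hunif Df hDle (1/((d:ℝ)+2)) (by positivity) ?_ ?_
      · rw [div_lt_one hd2]
        linarith [Nat.cast_nonneg (α := ℝ) d]
      · have hthird := pow_third d
        have h2n : (0:ℝ) < 2^(n-1:ℕ) := by positivity
        calc (1:ℝ) = (1/((d:ℝ)+2)) * (1/3) * (3*((d:ℝ)+2)) := by field_simp
          _ ≤ (1/((d:ℝ)+2)) * (1/3) * 2^(n-1:ℕ) :=
              mul_le_mul_of_nonneg_left h3d (by positivity)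
          _ ≤ (1/((d:ℝ)+2)) * (1-1/((d:ℝ)+2))^d * 2^(n-1:ℕ) := by
              refine mul_le_mul_of_nonneg_right ?_ h2n.le
              exact mul_le_mul_of_nonneg_left hthird (by positivity)
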